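/- In the arrow category C^→ of a category C equipped with an orthogonal factorization system (L, R), the classes L^dom = { squares (u, v) with u ∈ L } and R^dom = { squares (u, v) with u ∈ R and v an isomorphism } form an orthogonal factorization system on C^→; a square (u, v) : f → g factors as (ℓ_u, v) followed by (r_u, id), through the object g ∘ r_u : Q(u) → B'. -/

import Mathlib

open CategoryTheory

universe v u

/-- An orthogonal factorization system `(L, R)` on a category `C`: both classes are
closed under composition and contain all isomorphisms, every morphism factors as a
morphism in `L` followed by a morphism in `R`, and every commutative square with left
edge in `L` and right edge in `R` admits a unique diagonal filler. -/
structure OFS (C : Type u) [Category.{v} C] where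
  L : MorphismProperty C
  R : MorphismProperty C
  L_comp : ∀ {X Y Z : C} (f : X ⟶ Y) (g : Y ⟶ Z), L f → L g → L (f ≫ g)
  R_comp : ∀ {X Y Z : C} (f : X ⟶ Y) (g : Y ⟶ Z), R f → R g → R (f ≫ g)
  L_iso : ∀ {X Y : C} (f : X ⟶ Y) [IsIso f], L f
  R_iso : ∀ {X Y : C} (f : X ⟶ Y) [IsIso f], R f
  fac : ∀ {X Y : C} (f : X ⟶ Y), ∃ (Z : C) (l : X ⟶ Z) (r : Z ⟶ Y), L l ∧ R r ∧ l ≫ r = f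
  lift : ∀ {A B X Y : C} (u : A ⟶ B) (v : X ⟶ Y) (f : A ⟶ X) (g : B ⟶ Y),
    L u → R v → f ≫ v = u ≫ g → ∃! e : B ⟶ X, u ≫ e = f ∧ e ≫ v = g

/-- An orthogonal factorization system together with a choice of factorization
`f = l f ≫ r f` for every morphism `f`, with middle object (image) `im f`. -/
structure ChosenOFS (C : Type u) [Category.{v} C] extends OFS C where
  im : ∀ {X Y : C}, (X ⟶ Y) → C
  l : ∀ {X Y : C} (f : X ⟶ Y), X ⟶ im f
  r : ∀ {X Y : C} (f : X ⟶ Y), im f ⟶ Y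
  l_mem : ∀ {X Y : C} (f : X ⟶ Y), L (l f)
  r_mem : ∀ {X Y : C} (f : X ⟶ Y), R (r f)
  fac_eq : ∀ {X Y : C} (f : X ⟶ Y), l f ≫ r f = f

/-- The lift of an OFS `(L, R)` on `C` along the domain fibration `dom : C^→ ⥤ C`:
the arrow category carries an OFS whose left class consists of squares with top
component in `L` and whose right class consists of squares with top component in `R`
and invertible bottom component; a square `(u, v) : f ⟶ g` factors as `(ℓ_u, v)`
followed by `(r_u, 𝟙)` through the object `r_u ≫ g.hom : Q(u) ⟶ g.right`. -/
theorem stmt16 {C : Type u} [Category.{v} C] (S : ChosenOFS C) :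
    ∃ T : OFS (Arrow C),
      (∀ {f g : Arrow C} (sq : f ⟶ g), T.L sq ↔ S.L sq.left) ∧
      (∀ {f g : Arrow C} (sq : f ⟶ g), T.R sq ↔ S.R sq.left ∧ IsIso sq.right) ∧
      (∀ {f g : Arrow C} (sq : f ⟶ g),
        ∃ (a : f ⟶ Arrow.mk (S.r sq.left ≫ g.hom))
          (b : Arrow.mk (S.r sq.left ≫ g.hom) ⟶ g),
          a.left = S.l sq.left ∧ a.right = sq.right ∧
          b.left = S.r sq.left ∧ b.right = 𝟙 g.right ∧ a ≫ b = sq) := by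
  refine ⟨{
    L := fun f g sq => S.L sq.left
    R := fun f g sq => S.R sq.left ∧ IsIso sq.right
    L_comp := fun f g hf hg => S.L_comp _ _ hf hg
    R_comp := fun f g hf hg => ⟨S.R_comp _ _ hf.1 hg.1, by
      haveI := hf.2; haveI := hg.2
      exact inferInstanceAs (IsIso (f.right ≫ g.right))⟩
    L_iso := fun f _ => by
      haveI : IsIso (Arrow.leftFunc.map f) := inferInstance
      exact S.L_iso f.left
    R_iso := fun f _ => by
      haveI : IsIso (Arrow.leftFunc.map f) := inferInstance
      haveI : IsIso (Arrow.rightFunc.map f) := inferInstance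
      exact ⟨S.R_iso f.left, ‹IsIso (Arrow.rightFunc.map f)›⟩
    fac := ?_
    lift := ?_ }, fun sq => Iff.rfl, fun sq => Iff.rfl, ?_⟩
  · intro f g sq
    refine ⟨Arrow.mk (S.r sq.left ≫ g.hom),
      Arrow.homMk (u := S.l sq.left) (v := sq.right) ?_,
      Arrow.homMk (u := S.r sq.left) (v := 𝟙 g.right) ?_,
      S.l_mem _, ⟨S.r_mem _, (inferInstance : IsIso (𝟙 g.right))⟩, ?_⟩
    · simp [reassoc_of% S.fac_eq sq.left, Arrow.w]
    · simp
    · ext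
      · simpa using S.fac_eq sq.left
      · simp
  · rintro A B X Y u v f g hu ⟨hv, hviso⟩ hsq
    have hL := congrArg Arrow.leftFunc.map hsq
    have hR := congrArg Arrow.rightFunc.map hsq
    simp only [Functor.map_comp] at hL hR
    obtain ⟨e, ⟨he1, he2⟩, heu⟩ := S.lift u.left v.left f.left g.left hu hv hL
    haveI : IsIso v.right := hviso
    refine ⟨Arrow.homMk (u := e) (v := g.right ≫ inv v.right) ?_, ⟨?_, ?_⟩, ?_⟩
    · rw [← cancel_mono v.right]
      simp only [Category.assoc, IsIso.inv_hom_id, Category.comp_id]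
      rw [← Arrow.w v, ← Category.assoc, he2, Arrow.w g]
    · ext
      · simpa using he1
      · have hR' : f.right ≫ v.right = u.right ≫ g.right := hR
        simp only [Arrow.comp_right, Arrow.homMk_right]
        rw [← Category.assoc, ← hR']
        simp
    · ext
      · simpa using he2
      · simp
    · intro e' ⟨h1, h2⟩
      ext
      · exact heu e'.left ⟨congrArg Arrow.leftFunc.map h1,
          congrArg Arrow.leftFunc.map h2⟩
      · have h2' : e'.right ≫ v.right = g.right :=
          congrArg Arrow.rightFunc.map h2
        simp only [Arrow.homMk_right]
        rw [← h2']; simp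
  · intro f g sq
    refine ⟨Arrow.homMk (u := S.l sq.left) (v := sq.right) ?_,
      Arrow.homMk (u := S.r sq.left) (v := 𝟙 g.right) ?_, rfl, rfl, rfl, rfl, ?_⟩
    · simp [reassoc_of% S.fac_eq sq.left, Arrow.w]
    · simp
    · ext
      · simpa using S.fac_eq sq.left
      · simp
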